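/- Suppose the real numbers G⁰,…,G^N satisfy the tangency system: (G⁰+G¹)/4 = a₀, (Gʲ⁻¹+2Gʲ+Gʲ⁺¹)/4 = aⱼ for 1 ≤ j ≤ N−1, and (G^{N−1}+G^N)/4 = a_N, for given a₀,…,a_N ∈ ℝ. Then necessarily Σ_{j=0}^{N} (−1)ʲ aⱼ = 0. Conversely, if Σ_{j=0}^{N} (−1)ʲ aⱼ = 0, then for every choice of G^N ∈ ℝ there exist unique G⁰,…,G^{N−1} solving the system. -/

import Mathlib

noncomputable section

/-- The tangency linear system `(G⁰+G¹)/4 = a₀`,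
`(Gʲ⁻¹+2Gʲ+Gʲ⁺¹)/4 = aⱼ` for `1 ≤ j ≤ N−1`, `(G^{N−1}+G^N)/4 = a_N`. -/
def TangSys (N : ℕ) (hN : 1 ≤ N) (a G : Fin (N+1) → ℝ) : Prop :=
  ((G ⟨0, by omega⟩ + G ⟨1, by omega⟩)/4 = a ⟨0, by omega⟩) ∧
  (∀ (k : ℕ) (h1 : 1 ≤ k) (h2 : k ≤ N - 1),
    (G ⟨k-1, by omega⟩ + 2 * G ⟨k, by omega⟩ + G ⟨k+1, by omega⟩)/4 = a ⟨k, by omega⟩) ∧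
  ((G ⟨N-1, by omega⟩ + G ⟨N, by omega⟩)/4 = a ⟨N, by omega⟩)

noncomputable def Haux (a' : ℕ → ℝ) : ℕ → ℝ
  | 0 => 4 * a' 0
  | j + 1 => 4 * a' (j + 1) - Haux a' j

noncomputable def Gaux (N : ℕ) (H : ℕ → ℝ) (gN : ℝ) (j : ℕ) : ℝ :=
  if _h : j < N then H j - Gaux N H gN (j + 1) else gN
termination_by N - j
decreasing_by omega

lemma Gaux_ge (N : ℕ) (H : ℕ → ℝ) (gN : ℝ) (j : ℕ) (h : ¬ j < N) :
    Gaux N H gN j = gN := by rw [Gaux, dif_neg h]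

lemma Gaux_lt (N : ℕ) (H : ℕ → ℝ) (gN : ℝ) (j : ℕ) (h : j < N) :
    Gaux N H gN j = H j - Gaux N H gN (j + 1) := by rw [Gaux, dif_pos h]

lemma Haux_sum (a' : ℕ → ℝ) : ∀ j, (-1 : ℝ) ^ j * Haux a' j
    = ∑ i ∈ Finset.range (j + 1), (-1 : ℝ) ^ i * (4 * a' i)
  | 0 => by simp [Haux]
  | j + 1 => by
      rw [Finset.sum_range_succ, ← Haux_sum a' j]
      simp only [Haux]
      rw [pow_succ]
      ring

/-- Solvability of the tangency system forces the alternating sum of the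
right-hand sides to vanish; conversely, when that alternating sum vanishes,
for every value of `G^N` there is a unique solution. -/
theorem tangency_system_solvability (N : ℕ) (hN : 1 ≤ N) (a : Fin (N+1) → ℝ) :
    (∀ G : Fin (N+1) → ℝ, TangSys N hN a G →
      ∑ j : Fin (N+1), (-1 : ℝ)^(j : ℕ) * a j = 0) ∧
    ((∑ j : Fin (N+1), (-1 : ℝ)^(j : ℕ) * a j = 0) →
      ∀ gN : ℝ, ∃! G : Fin (N+1) → ℝ, G ⟨N, by omega⟩ = gN ∧ TangSys N hN a G) := by
  obtain ⟨m, rfl⟩ : ∃ m, N = m + 1 := ⟨N - 1, by omega⟩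
  have hcongr : ∀ (f : Fin (m+2) → ℝ) (x y : ℕ) (hx : x < m+2) (hy : y < m+2),
      x = y → f ⟨x, hx⟩ = f ⟨y, hy⟩ := by
    intro f x y hx hy h; subst h; rfl
  set a' : ℕ → ℝ := fun k => a ⟨min k (m+1), by omega⟩ with ha'def
  have ha' : ∀ (k : ℕ) (h : k < m+2), a' k = a ⟨k, h⟩ := by
    intro k h
    exact hcongr a (min k (m+1)) k (by omega) h (by omega)
  -- transfer a solution of the Fin-indexed system to a ℕ-indexed one
  have sysN : ∀ G : Fin (m+2) → ℝ, TangSys (m+1) hN a G →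
      ∃ GG : ℕ → ℝ, (∀ (i : ℕ) (h : i < m+2), GG i = G ⟨i, h⟩) ∧
        (GG 0 + GG 1 = 4 * a' 0) ∧
        (∀ l, l + 1 ≤ m → GG l + 2 * GG (l+1) + GG (l+2) = 4 * a' (l+1)) ∧
        (GG m + GG (m+1) = 4 * a' (m+1)) := by
    intro G hG
    set GG : ℕ → ℝ := fun i => G ⟨min i (m+1), by omega⟩ with hGGdef
    have hGG : ∀ (i : ℕ) (h : i < m+2), GG i = G ⟨i, h⟩ := by
      intro i h
      exact hcongr G (min i (m+1)) i (by omega) h (by omega)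
    refine ⟨GG, hGG, ?_, ?_, ?_⟩
    · have h1 := hG.1
      rw [hGG 0 (by omega), hGG 1 (by omega), ha' 0 (by omega)]
      linarith [h1]
    · intro l hl
      have h1 : (G ⟨l, by omega⟩ + 2 * G ⟨l+1, by omega⟩ + G ⟨l+2, by omega⟩)/4
          = a ⟨l+1, by omega⟩ := hG.2.1 (l+1) (by omega) (by omega)
      rw [hGG l (by omega), hGG (l+1) (by omega), hGG (l+2) (by omega), ha' (l+1) (by omega)]
      linarith [h1]
    · have h1 : (G ⟨m, by omega⟩ + G ⟨m+1, by omega⟩)/4 = a ⟨m+1, by omega⟩ := hG.2.2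
      rw [hGG m (by omega), hGG (m+1) (by omega), ha' (m+1) (by omega)]
      linarith [h1]
  -- pair recursion for any ℕ-indexed solution
  have pairlem : ∀ GG : ℕ → ℝ,
      (GG 0 + GG 1 = 4 * a' 0) →
      (∀ l, l + 1 ≤ m → GG l + 2 * GG (l+1) + GG (l+2) = 4 * a' (l+1)) →
      ∀ j, j ≤ m → GG j + GG (j+1) = Haux a' j := by
    intro GG h0 hmid j
    induction j with
    | zero => intro _; simp only [Haux]; linarith
    | succ l ih =>
      intro hl
      have h1 := hmid l hl
      have h2 := ih (by omega)
      simp only [Haux]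
      linarith
  -- the alternating sum in ℕ-indexed form
  have hsum : ∑ j : Fin (m+2), (-1 : ℝ)^(j : ℕ) * a j
      = ∑ i ∈ Finset.range (m+2), (-1 : ℝ)^i * a' i := by
    rw [← Fin.sum_univ_eq_sum_range (fun i => (-1 : ℝ)^i * a' i) (m+2)]
    refine Finset.sum_congr rfl ?_
    intro j _
    rw [ha' j.1 j.2]
  have hkey : ∀ j, 4 * ∑ i ∈ Finset.range (j+1), (-1 : ℝ)^i * a' i
      = (-1 : ℝ)^j * Haux a' j := by
    intro j
    rw [Haux_sum, Finset.mul_sum]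
    exact Finset.sum_congr rfl fun i _ => by ring
  constructor
  · -- necessity
    intro G hG
    obtain ⟨GG, hGG, h0, hmid, hlast⟩ := sysN G hG
    have hHm : Haux a' m = 4 * a' (m+1) := by
      have := pairlem GG h0 hmid m le_rfl
      linarith
    rw [hsum, Finset.sum_range_succ]
    have h4 := hkey m
    rw [hHm] at h4
    rw [pow_succ]
    linarith [h4]
  · -- sufficiency
    intro hS0 gN
    rw [hsum, Finset.sum_range_succ] at hS0
    have h4 := hkey m
    have h5 : (-1 : ℝ)^m * Haux a' m = (-1 : ℝ)^m * (4 * a' (m+1)) := by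
      rw [pow_succ] at hS0
      nlinarith [h4, hS0]
    have hcomp : Haux a' m = 4 * a' (m+1) :=
      mul_left_cancel₀ (pow_ne_zero m (by norm_num : (-1 : ℝ) ≠ 0)) h5
    set GG0 : ℕ → ℝ := Gaux (m+1) (Haux a') gN with hGG0def
    have hGN : ∀ i, m+1 ≤ i → GG0 i = gN := fun i h => Gaux_ge _ _ _ _ (by omega)
    have hGpair : ∀ j, j ≤ m → GG0 j + GG0 (j+1) = Haux a' j := by
      intro j hj
      rw [hGG0def]
      rw [Gaux_lt _ _ _ _ (by omega : j < m+1)]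
      ring
    refine ⟨fun j => GG0 (j : ℕ), ⟨?_, ?_, ?_, ?_⟩, ?_⟩
    · exact hGN (m+1) le_rfl
    · have e0 : (GG0 0 + GG0 1)/4 = a ⟨0, by omega⟩ := by
        have := hGpair 0 (by omega)
        simp only [Haux] at this
        rw [← ha' 0 (by omega)]
        linarith
      exact e0
    · intro k h1 h2
      obtain ⟨l, rfl⟩ : ∃ l, k = l + 1 := ⟨k - 1, by omega⟩
      have em : (GG0 l + 2 * GG0 (l+1) + GG0 (l+2))/4 = a ⟨l+1, by omega⟩ := by
        have p1 := hGpair l (by omega)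
        have p2 := hGpair (l+1) (by omega)
        simp only [Haux] at p2
        rw [← ha' (l+1) (by omega)]
        linarith
      exact em
    · have el : (GG0 m + GG0 (m+1))/4 = a ⟨m+1, by omega⟩ := by
        have := hGpair m le_rfl
        rw [hcomp] at this
        rw [← ha' (m+1) (by omega)]
        linarith
      exact el
    · intro G' hG'
      obtain ⟨hG'N, hG'sys⟩ := hG'
      obtain ⟨GG', hGG', h0', hmid', hlast'⟩ := sysN G' hG'sys
      have pair' := pairlem GG' h0' hmid'
      have hN' : GG' (m+1) = gN := by rw [hGG' (m+1) (by omega)]; exact hG'N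
      have huniq : ∀ d, d ≤ m+1 → GG' (m+1-d) = GG0 (m+1-d) := by
        intro d
        induction d with
        | zero =>
          intro _
          exact hN'.trans (hGN (m+1) le_rfl).symm
        | succ e ih =>
          intro he
          have h1 := pair' (m+1-(e+1)) (by omega)
          have h2 := hGpair (m+1-(e+1)) (by omega)
          have h3 : m+1-(e+1)+1 = m+1-e := by omega
          rw [h3] at h1 h2
          have h4 := ih (by omega)
          linarith
      funext j
      have hjle : (j : ℕ) ≤ m+1 := by have := j.2; omega
      have hu := huniq (m+1-(j : ℕ)) (by omega)
      have hj2 : m+1-(m+1-(j : ℕ)) = (j : ℕ) := by omega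
      rw [hj2] at hu
      rw [hGG' j.1 j.2] at hu
      exact hu
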